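/- Let ψ₁,…,ψ_m be unit vectors in ℂ^d with priors p_k > 0, Σ p_k = 1, such that S := Σ_ℓ p_ℓ |ψ_ℓ⟩⟨ψ_ℓ| is positive definite, and let (M_k) be the pretty good measurement, i.e. the Belavkin weighted square-root measurement with weights W_k = p_k. If the quantities p_k ⟨ψ_k, M_k ψ_k⟩ are equal for all k (i.e. the chance of successfully identifying each state ψ_k is inversely proportional to its a priori probability), then (M_k) is optimal: for every POVM (N_k) on ℂ^d, Σ_k p_k ⟨ψ_k, M_k ψ_k⟩ ≥ Σ_k p_k ⟨ψ_k, N_k ψ_k⟩. -/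

import Mathlib

open Matrix Filter
open scoped ComplexOrder

noncomputable section

lemma helper_vecMulVec_mulVec {d : ℕ} (w v y : Fin d → ℂ) :
    vecMulVec w v *ᵥ y = (v ⬝ᵥ y) • w := by
  funext i
  simp only [mulVec, dotProduct, vecMulVec_apply, Pi.smul_apply, smul_eq_mul, Finset.sum_mul]
  exact Finset.sum_congr rfl fun j _ => by ring

lemma helper_trace_vecMulVec_mul {d : ℕ} (w v : Fin d → ℂ) (A : Matrix (Fin d) (Fin d) ℂ) :
    (vecMulVec w v * A).trace = v ⬝ᵥ A *ᵥ w := by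
  simp only [Matrix.trace, Matrix.diag, Matrix.mul_apply, vecMulVec_apply, dotProduct, mulVec,
    dotProduct]
  rw [Finset.sum_comm]
  exact Finset.sum_congr rfl fun j _ => by rw [Finset.mul_sum]; exact Finset.sum_congr rfl fun i _ => by ring

lemma helper_trace_mul_self_re_nonneg {d : ℕ} (E : Matrix (Fin d) (Fin d) ℂ) :
    0 ≤ (Eᴴ * E).trace.re := by
  have h : (Eᴴ * E).trace = ∑ i, ∑ j, (starRingEnd ℂ) (E j i) * E j i := by
    simp [Matrix.trace, Matrix.diag, Matrix.mul_apply, Matrix.conjTranspose_apply]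
  rw [h]
  rw [Complex.re_sum]
  refine Finset.sum_nonneg fun i _ => ?_
  rw [Complex.re_sum]
  refine Finset.sum_nonneg fun j _ => ?_
  rw [mul_comm, Complex.mul_conj]
  simp [Complex.normSq_nonneg]

lemma helper_sqrt_aux {n : Type*} [Fintype n] [DecidableEq n]
    {A : Matrix n n ℂ} (hA : A.PosSemidef) :
    ((hA.1.eigenvectorUnitary : Matrix n n ℂ) *
      diagonal (fun i => ((Real.sqrt (hA.1.eigenvalues i) : ℝ) : ℂ)) *
      (star (hA.1.eigenvectorUnitary : Matrix n n ℂ))).PosSemidef ∧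
    ((hA.1.eigenvectorUnitary : Matrix n n ℂ) *
      diagonal (fun i => ((Real.sqrt (hA.1.eigenvalues i) : ℝ) : ℂ)) *
      (star (hA.1.eigenvectorUnitary : Matrix n n ℂ))) *
    ((hA.1.eigenvectorUnitary : Matrix n n ℂ) *
      diagonal (fun i => ((Real.sqrt (hA.1.eigenvalues i) : ℝ) : ℂ)) *
      (star (hA.1.eigenvectorUnitary : Matrix n n ℂ))) = A := by
  constructor
  · rw [star_eq_conjTranspose]
    refine PosSemidef.mul_mul_conjTranspose_same (PosSemidef.diagonal fun i => ?_) _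
    simp [Complex.zero_le_real, Real.sqrt_nonneg]
  · conv_rhs => rw [hA.1.spectral_theorem, Unitary.conjStarAlgAut_apply]
    have hU : (star (hA.1.eigenvectorUnitary : Matrix n n ℂ)) * (hA.1.eigenvectorUnitary : Matrix n n ℂ) = 1 :=
      Unitary.coe_star_mul_self _
    simp only [Matrix.mul_assoc]
    rw [← Matrix.mul_assoc (star _) (hA.1.eigenvectorUnitary : Matrix n n ℂ), hU, Matrix.one_mul,
      ← Matrix.mul_assoc (diagonal _) (diagonal _), diagonal_mul_diagonal]
    congr 3
    funext i
    simp only [Function.comp_apply, RCLike.ofReal_real_eq_id, id]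
    rw [← Complex.ofReal_mul, Real.mul_self_sqrt (hA.eigenvalues_nonneg i)]
    rfl

lemma helper_psd_eq {d : ℕ} {A : Matrix (Fin d) (Fin d) ℂ} (hA : A.PosSemidef) :
    ∃ B : Matrix (Fin d) (Fin d) ℂ, A = Bᴴ * B := by
  obtain ⟨h1, h2⟩ := helper_sqrt_aux hA
  exact ⟨_, by rw [h1.1.eq, h2]⟩

lemma helper_trace_mul_psd_re_nonneg {d : ℕ} {A B : Matrix (Fin d) (Fin d) ℂ}
    (hA : A.PosSemidef) (hB : B.PosSemidef) : 0 ≤ (A * B).trace.re := by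
  obtain ⟨C, rfl⟩ := helper_psd_eq hA
  obtain ⟨D, rfl⟩ := helper_psd_eq hB
  have h : (Cᴴ * C * (Dᴴ * D)).trace = ((C * Dᴴ)ᴴ * (C * Dᴴ)).trace := by
    rw [Matrix.conjTranspose_mul, Matrix.conjTranspose_conjTranspose,
        Matrix.trace_mul_comm (D * Cᴴ) (C * Dᴴ),
        Matrix.mul_assoc Cᴴ C, Matrix.trace_mul_comm Cᴴ (C * (Dᴴ * D)),
        Matrix.mul_assoc, Matrix.mul_assoc, Matrix.mul_assoc]
  rw [h]
  exact helper_trace_mul_self_re_nonneg _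

lemma helper_cs_dot {d : ℕ} (a b : Fin d → ℂ) :
    Complex.normSq (star a ⬝ᵥ b) ≤ (star a ⬝ᵥ a).re * (star b ⬝ᵥ b).re := by
  have h := norm_inner_le_norm (𝕜 := ℂ) (E := EuclideanSpace ℂ (Fin d))
    ((WithLp.equiv 2 _).symm a) ((WithLp.equiv 2 _).symm b)
  rw [WithLp.equiv_symm_apply, EuclideanSpace.inner_toLp_toLp, dotProduct_comm] at h
  have ha : ‖(WithLp.equiv 2 (Fin d → ℂ)).symm a‖ ^ 2 = (star a ⬝ᵥ a).re := by
    rw [← @inner_self_eq_norm_sq ℂ, WithLp.equiv_symm_apply, EuclideanSpace.inner_toLp_toLp, dotProduct_comm]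
    rfl
  have hb : ‖(WithLp.equiv 2 (Fin d → ℂ)).symm b‖ ^ 2 = (star b ⬝ᵥ b).re := by
    rw [← @inner_self_eq_norm_sq ℂ, WithLp.equiv_symm_apply, EuclideanSpace.inner_toLp_toLp, dotProduct_comm]
    rfl
  have h2 := mul_self_le_mul_self (norm_nonneg _) h
  calc Complex.normSq (star a ⬝ᵥ b) = ‖star a ⬝ᵥ b‖ * ‖star a ⬝ᵥ b‖ := by
        rw [Complex.normSq_eq_norm_sq]; simp [sq]
    _ ≤ (‖(WithLp.equiv 2 (Fin d → ℂ)).symm a‖ * ‖(WithLp.equiv 2 (Fin d → ℂ)).symm b‖) *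
        (‖(WithLp.equiv 2 (Fin d → ℂ)).symm a‖ * ‖(WithLp.equiv 2 (Fin d → ℂ)).symm b‖) := h2
    _ = (star a ⬝ᵥ a).re * (star b ⬝ᵥ b).re := by rw [← ha, ← hb]; ring

lemma helper_dot_conjTranspose_mul {d : ℕ} (B : Matrix (Fin d) (Fin d) ℂ) (u v : Fin d → ℂ) :
    star u ⬝ᵥ (Bᴴ * B) *ᵥ v = star (B *ᵥ u) ⬝ᵥ (B *ᵥ v) := by
  rw [← Matrix.mulVec_mulVec, Matrix.dotProduct_mulVec, Matrix.star_mulVec]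

lemma helper_cs_psd {d : ℕ} {T : Matrix (Fin d) (Fin d) ℂ} (hT : T.PosSemidef)
    (u v : Fin d → ℂ) :
    Complex.normSq (star u ⬝ᵥ T *ᵥ v) ≤ (star u ⬝ᵥ T *ᵥ u).re * (star v ⬝ᵥ T *ᵥ v).re := by
  obtain ⟨B, rfl⟩ := helper_psd_eq hT
  rw [helper_dot_conjTranspose_mul, helper_dot_conjTranspose_mul, helper_dot_conjTranspose_mul]
  exact helper_cs_dot _ _


/-- The rank-one projector `|ψ⟩⟨ψ|` as a matrix. -/
def proj {d : ℕ} (ψ : Fin d → ℂ) : Matrix (Fin d) (Fin d) ℂ := vecMulVec ψ (star ψ)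

/-- The (real) expectation value `⟨ψ, M ψ⟩`. -/
def expVal {d : ℕ} (M : Matrix (Fin d) (Fin d) ℂ) (ψ : Fin d → ℂ) : ℝ :=
  (star ψ ⬝ᵥ M *ᵥ ψ).re

/-- A POVM: a finite family of PSD matrices summing to the identity. -/
def IsPOVM {d m : ℕ} (M : Fin m → Matrix (Fin d) (Fin d) ℂ) : Prop :=
  (∀ k, (M k).PosSemidef) ∧ ∑ k, M k = 1

/-- The square root of a positive semidefinite matrix, as `Matrix.PosSemidef.sqrt` was defined
in the older Mathlib (removed since). -/
def Matrix.PosSemidef.sqrt {n : Type*} [Fintype n] [DecidableEq n]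
    {A : Matrix n n ℂ} (hA : A.PosSemidef) : Matrix n n ℂ :=
  (hA.1.eigenvectorUnitary : Matrix n n ℂ) *
    diagonal (fun i => ((Real.sqrt (hA.1.eigenvalues i) : ℝ) : ℂ)) *
    (star (hA.1.eigenvectorUnitary : Matrix n n ℂ))

lemma Matrix.PosSemidef.posSemidef_sqrt {n : Type*} [Fintype n] [DecidableEq n]
    {A : Matrix n n ℂ} (hA : A.PosSemidef) : hA.sqrt.PosSemidef :=
  (helper_sqrt_aux hA).1

lemma Matrix.PosSemidef.sqrt_mul_self {n : Type*} [Fintype n] [DecidableEq n]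
    {A : Matrix n n ℂ} (hA : A.PosSemidef) : hA.sqrt * hA.sqrt = A :=
  (helper_sqrt_aux hA).2



lemma helper_dot_proj {d : ℕ} (φ x y : Fin d → ℂ) :
    star x ⬝ᵥ (proj φ) *ᵥ y = (star φ ⬝ᵥ y) * (star x ⬝ᵥ φ) := by
  rw [proj, helper_vecMulVec_mulVec, dotProduct_smul, smul_eq_mul]

lemma helper_proj_hermitian {d : ℕ} (φ : Fin d → ℂ) : (proj φ).IsHermitian := by
  ext i j
  simp [proj, Matrix.conjTranspose_apply, vecMulVec_apply, mul_comm, Pi.star_apply]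

/-- Belavkin/Ban optimality condition for the pretty good measurement: if the
quantities `p k * ⟨ψ k, M k ψ k⟩` are all equal, then the pretty good measurement
(weights `W k = p k`) is optimal. -/
theorem pgm_equal_condition_implies_optimal {d m : ℕ}
    (ψ : Fin m → Fin d → ℂ) (hψ : ∀ k, star (ψ k) ⬝ᵥ ψ k = 1)
    (p : Fin m → ℝ) (hp : ∀ k, 0 < p k) (hp1 : ∑ k, p k = 1)
    (hS : (∑ ℓ, p ℓ • proj (ψ ℓ)).PosDef)
    (M : Fin m → Matrix (Fin d) (Fin d) ℂ)
    (hM : ∀ k, M k = (Matrix.PosSemidef.sqrt hS.posSemidef)⁻¹ * (p k • proj (ψ k)) * (Matrix.PosSemidef.sqrt hS.posSemidef)⁻¹)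
    (hcond : ∀ k l, p k * expVal (M k) (ψ k) = p l * expVal (M l) (ψ l)) :
    ∀ N : Fin m → Matrix (Fin d) (Fin d) ℂ, IsPOVM N →
      ∑ k, p k * expVal (N k) (ψ k) ≤ ∑ k, p k * expVal (M k) (ψ k) := by
  intro N hN
  rcases Nat.eq_zero_or_pos m with hm | hm
  · subst hm; simp
  set T := hS.posSemidef.sqrt with hTdef
  have hTpsd : T.PosSemidef := hS.posSemidef.posSemidef_sqrt
  have hTH : T.IsHermitian := hTpsd.1
  have hTsq : T * T = ∑ ℓ, p ℓ • proj (ψ ℓ) := hS.posSemidef.sqrt_mul_self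
  have hdetT : IsUnit T.det := by
    have h1 : T.det * T.det = (∑ ℓ, p ℓ • proj (ψ ℓ)).det := by rw [← Matrix.det_mul, hTsq]
    have h2 : (∑ ℓ, p ℓ • proj (ψ ℓ)).det ≠ 0 := ne_of_gt hS.det_pos
    exact isUnit_iff_ne_zero.mpr (fun h => h2 (by rw [← h1, h, mul_zero]))
  have hTinv : T⁻¹ * T = 1 := Matrix.nonsing_inv_mul T hdetT
  have hTinv' : T * T⁻¹ = 1 := Matrix.mul_nonsing_inv T hdetT
  have hTipsd : T⁻¹.PosSemidef := hTpsd.inv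
  have hTiH : (T⁻¹)ᴴ = T⁻¹ := hTipsd.1
  set a : Fin m → ℝ := fun k => (star (ψ k) ⬝ᵥ T⁻¹ *ᵥ ψ k).re with hadef
  have hareal : ∀ k, star (ψ k) ⬝ᵥ T⁻¹ *ᵥ ψ k = ((a k : ℝ) : ℂ) := by
    intro k
    have h := hTipsd.dotProduct_mulVec_nonneg (ψ k)
    rw [Complex.nonneg_iff] at h
    exact Complex.ext rfl h.2.symm
  have hanneg : ∀ k, 0 ≤ a k := by
    intro k
    have h := hTipsd.dotProduct_mulVec_nonneg (ψ k)
    rw [Complex.nonneg_iff] at h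
    exact h.1
  -- value of the PGM
  have hMval : ∀ k, expVal (M k) (ψ k) = p k * (a k * a k) := by
    intro k
    rw [expVal, hM k, ← Matrix.mulVec_mulVec, ← Matrix.mulVec_mulVec,
        smul_mulVec, proj, helper_vecMulVec_mulVec, hareal k,
        Matrix.mulVec_smul, Matrix.mulVec_smul, dotProduct_smul, dotProduct_smul,
        hareal k]
    rw [smul_eq_mul, ← Complex.ofReal_mul, Complex.real_smul, ← Complex.ofReal_mul,
      Complex.ofReal_re]
  -- the common value
  set k0 : Fin m := ⟨0, hm⟩ with hk0
  set γ : ℝ := p k0 * a k0 with hγdef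
  have hγ : ∀ k, p k * a k = γ := by
    intro k
    have h := hcond k k0
    rw [hMval k, hMval k0] at h
    have h2 : (p k * a k) ^ 2 = (p k0 * a k0) ^ 2 := by ring_nf; ring_nf at h; linarith
    exact (sq_eq_sq₀ (mul_nonneg (hp k).le (hanneg k))
      (mul_nonneg (hp k0).le (hanneg k0))).mp h2
  have hγnn : 0 ≤ γ := hγdef ▸ mul_nonneg (hp k0).le (hanneg k0)
  -- the dual certificate is PSD
  have hGpsd : ∀ k, ((γ : ℂ) • T - (p k : ℂ) • proj (ψ k)).PosSemidef := by
    intro k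
    refine Matrix.PosSemidef.of_dotProduct_mulVec_nonneg ?_ ?_
    · rw [Matrix.IsHermitian, Matrix.conjTranspose_sub, Matrix.conjTranspose_smul,
        Matrix.conjTranspose_smul, hTH.eq, (helper_proj_hermitian (ψ k)).eq,
        Complex.star_def, Complex.conj_ofReal, Complex.conj_ofReal]
    · intro x
      rw [Matrix.sub_mulVec, dotProduct_sub, smul_mulVec, smul_mulVec,
        dotProduct_smul, dotProduct_smul, helper_dot_proj]
      set z : ℂ := star (ψ k) ⬝ᵥ x with hz
      have hzx : star x ⬝ᵥ ψ k = (starRingEnd ℂ) z := by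
        rw [hz, star_dotProduct x (ψ k), starRingEnd_apply]
      set w : ℂ := star x ⬝ᵥ T *ᵥ x with hw
      have hwre : w = ((w.re : ℝ) : ℂ) := by
        have h := hTpsd.dotProduct_mulVec_nonneg x
        rw [Complex.nonneg_iff] at h
        exact Complex.ext rfl h.2.symm
      have hwnn : 0 ≤ w.re := hTpsd.re_dotProduct_nonneg x
      have hzval : z = star (T⁻¹ *ᵥ ψ k) ⬝ᵥ T *ᵥ x := by
        rw [Matrix.star_mulVec, hTiH, ← Matrix.dotProduct_mulVec,
          Matrix.mulVec_mulVec, hTinv, Matrix.one_mulVec]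
      have hcs : Complex.normSq z ≤ a k * w.re := by
        have h := helper_cs_psd hTpsd (T⁻¹ *ᵥ ψ k) x
        rw [← hzval] at h
        have hu : star (T⁻¹ *ᵥ ψ k) ⬝ᵥ T *ᵥ (T⁻¹ *ᵥ ψ k) = ((a k : ℝ) : ℂ) := by
          rw [Matrix.mulVec_mulVec, hTinv', Matrix.one_mulVec, Matrix.star_mulVec, hTiH,
            ← Matrix.dotProduct_mulVec, hareal k]
        rw [hu] at h
        simpa using h
      have key : p k * Complex.normSq z ≤ γ * w.re := by
        have h1 : p k * Complex.normSq z ≤ p k * (a k * w.re) :=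
          mul_le_mul_of_nonneg_left hcs (hp k).le
        have h2 : p k * (a k * w.re) = γ * w.re := by rw [← hγ k]; ring
        linarith
      rw [hz, hzx, Complex.mul_conj, hwre, smul_eq_mul, smul_eq_mul]
      rw [← Complex.ofReal_mul, ← Complex.ofReal_mul, ← Complex.ofReal_sub,
        Complex.zero_le_real]
      linarith
  -- per-k bound for an arbitrary POVM
  have hbound : ∀ k, p k * expVal (N k) (ψ k) ≤ γ * ((T * N k).trace).re := by
    intro k
    have h := helper_trace_mul_psd_re_nonneg (hGpsd k) (hN.1 k)
    rw [Matrix.sub_mul, Matrix.smul_mul, Matrix.smul_mul, Matrix.trace_sub,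
      Matrix.trace_smul, Matrix.trace_smul, Complex.sub_re, smul_eq_mul, smul_eq_mul,
      Complex.re_ofReal_mul, Complex.re_ofReal_mul, proj, helper_trace_vecMulVec_mul] at h
    rw [expVal]
    linarith
  -- trace identity
  have htr : (T.trace).re = ∑ ℓ, p ℓ * a ℓ := by
    have hT1 : T = T⁻¹ * (∑ ℓ, p ℓ • proj (ψ ℓ)) := by
      rw [← hTsq, ← Matrix.mul_assoc, hTinv, Matrix.one_mul]
    rw [hT1, Matrix.mul_sum, Matrix.trace_sum, Complex.re_sum]
    refine Finset.sum_congr rfl fun ℓ _ => ?_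
    rw [Matrix.mul_smul, Matrix.trace_smul, Matrix.trace_mul_comm, proj,
      helper_trace_vecMulVec_mul, hareal ℓ]
    simp [Complex.real_smul, Complex.re_ofReal_mul]
  -- put it together
  calc ∑ k, p k * expVal (N k) (ψ k)
      ≤ ∑ k, γ * ((T * N k).trace).re := Finset.sum_le_sum fun k _ => hbound k
    _ = γ * ((T * ∑ k, N k).trace).re := by
        rw [Matrix.mul_sum, Matrix.trace_sum, Complex.re_sum, Finset.mul_sum]
    _ = γ * (T.trace).re := by rw [hN.2, Matrix.mul_one]
    _ = ∑ k, γ * (p k * a k) := by rw [htr, Finset.mul_sum]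
    _ = ∑ k, p k * expVal (M k) (ψ k) := by
        refine Finset.sum_congr rfl fun k _ => ?_
        rw [hMval k, ← hγ k]
        ring
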